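/- Let D be a finite abelian group equipped with a nondegenerate alternating bimultiplicative pairing e: D × D → ℂ*. If A ⊆ D is an isotropic subgroup (e vanishes on A × A), then the index [D : A] is divisible by √#D. Moreover, for any maximal isotropic subgroup U, #U = [D : U] = √#D. -/

import Mathlib

private structure Pairing13 (D : Type*) [CommGroup D] where
  e : D → D → ℂ
  hbm₁ : ∀ x y z : D, e (x * y) z = e x z * e y z
  hbm₂ : ∀ x y z : D, e x (y * z) = e x y * e x z
  halt : ∀ x : D, e x x = 1

namespace Pairing13

variable {D : Type*} [CommGroup D] (P : Pairing13 D)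

private lemma mul_symm (x y : D) : P.e x y * P.e y x = 1 := by
  have h := P.halt (x * y)
  rw [P.hbm₁, P.hbm₂, P.hbm₂, P.halt, P.halt, one_mul, mul_one] at h
  exact h

private lemma ne_zero (x y : D) : P.e x y ≠ 0 := fun h => by
  have h2 := P.mul_symm x y
  rw [h, zero_mul] at h2
  exact zero_ne_one h2

private lemma one_right (x : D) : P.e x 1 = 1 := by
  have h := P.hbm₂ x 1 1
  rw [mul_one] at h
  have h2 : (1 : ℂ) * P.e x 1 = P.e x 1 * P.e x 1 := by rw [one_mul]; exact h
  exact (mul_right_cancel₀ (P.ne_zero x 1) h2).symm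

private lemma one_left (x : D) : P.e 1 x = 1 := by
  have h := P.hbm₁ 1 1 x
  rw [mul_one] at h
  have h2 : (1 : ℂ) * P.e 1 x = P.e 1 x * P.e 1 x := by rw [one_mul]; exact h
  exact (mul_right_cancel₀ (P.ne_zero 1 x) h2).symm

private lemma symm_eq_inv (x y : D) : P.e y x = (P.e x y)⁻¹ :=
  eq_inv_of_mul_eq_one_right (P.mul_symm x y)

/-- The right kernel of `w`. -/
private def rker (w : D) : Subgroup D where
  carrier := {z | P.e w z = 1}
  one_mem' := P.one_right w
  mul_mem' := fun {a b} (ha : P.e w a = 1) (hb : P.e w b = 1) =>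
    show P.e w (a * b) = 1 by rw [P.hbm₂, ha, hb, mul_one]
  inv_mem' := fun {a} (ha : P.e w a = 1) => show P.e w a⁻¹ = 1 by
    have h := P.hbm₂ w a a⁻¹
    rw [mul_inv_cancel, P.one_right, ha, one_mul] at h
    exact h.symm

/-- The left kernel of `z`. -/
private def lker (z : D) : Subgroup D where
  carrier := {w | P.e w z = 1}
  one_mem' := P.one_left z
  mul_mem' := fun {a b} (ha : P.e a z = 1) (hb : P.e b z = 1) =>
    show P.e (a * b) z = 1 by rw [P.hbm₁, ha, hb, mul_one]
  inv_mem' := fun {a} (ha : P.e a z = 1) => show P.e a⁻¹ z = 1 by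
    have h := P.hbm₁ a a⁻¹ z
    rw [mul_inv_cancel, P.one_left, ha, one_mul] at h
    exact h.symm

/-- The orthogonal complement of a subgroup. -/
private def perp (A : Subgroup D) : Subgroup D where
  carrier := {x | ∀ a ∈ A, P.e x a = 1}
  one_mem' := fun a _ => P.one_left a
  mul_mem' := fun {x y} hx hy a ha => (P.lker a).mul_mem (hx a ha) (hy a ha)
  inv_mem' := fun {x} hx a ha => (P.lker a).inv_mem (hx a ha)

private noncomputable def toChar (A : Subgroup D) : D →* (↥A →* ℂˣ) where
  toFun x :=
  { toFun := fun a => Units.mk0 (P.e x a) (P.ne_zero x a)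
    map_one' := Units.ext <| by simpa using P.one_right x
    map_mul' := fun a b => Units.ext <| by simpa using P.hbm₂ x a b }
  map_one' := MonoidHom.ext fun a => Units.ext <| by simpa using P.one_left (a : D)
  map_mul' x y := MonoidHom.ext fun a => Units.ext <| by simpa using P.hbm₁ x y (a : D)

private lemma ker_toChar (A : Subgroup D) : (P.toChar A).ker = P.perp A := by
  ext x
  constructor
  · intro h a ha
    have h' : P.toChar A x = 1 := h
    have := congrArg Units.val (DFunLike.congr_fun h' ⟨a, ha⟩)
    simpa [toChar] using this
  · intro h
    refine MonoidHom.ext fun a => Units.ext ?_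
    simpa [toChar] using h (a : D) a.2

private noncomputable def chr (a : D) : D →* ℂˣ where
  toFun x := Units.mk0 (P.e x a) (P.ne_zero x a)
  map_one' := Units.ext <| by simpa using P.one_left a
  map_mul' x y := Units.ext <| by simpa using P.hbm₁ x y a

private noncomputable def ofQuot (A : Subgroup D) : ↥A →* ((D ⧸ P.perp A) →* ℂˣ) where
  toFun a := QuotientGroup.lift (P.perp A) (P.chr (a : D))
    (fun x hx => Units.ext <| by simpa [chr] using hx (a : D) a.2)
  map_one' := MonoidHom.ext fun q => QuotientGroup.induction_on q fun x =>
    Units.ext <| by simpa [chr] using P.one_right x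
  map_mul' a b := MonoidHom.ext fun q => QuotientGroup.induction_on q fun x =>
    Units.ext <| by simpa [chr] using P.hbm₂ x (a : D) (b : D)

private lemma ofQuot_apply (A : Subgroup D) (a : ↥A) (x : D) :
    ((P.ofQuot A a) (x : D ⧸ P.perp A) : ℂ) = P.e x a := rfl

private lemma dual_equiv (G : Type*) [CommGroup G] [Finite G] :
    Nonempty ((G →* ℂˣ) ≃* G) := by
  have : NeZero ((Monoid.exponent G : ℂ)) :=
    ⟨Nat.cast_ne_zero.mpr Monoid.exponent_ne_zero_of_finite⟩
  exact CommGroup.monoidHom_mulEquiv_of_hasEnoughRootsOfUnity G ℂ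

private lemma index_perp [Finite D] (hnd : ∀ x : D, (∀ y : D, P.e x y = 1) → x = 1)
    (A : Subgroup D) : (P.perp A).index = Nat.card A := by
  obtain ⟨eqA⟩ := dual_equiv ↥A
  obtain ⟨eqQ⟩ := dual_equiv (D ⧸ P.perp A)
  have finA : Finite (↥A →* ℂˣ) := Finite.of_equiv _ eqA.toEquiv.symm
  have finQ : Finite ((D ⧸ P.perp A) →* ℂˣ) := Finite.of_equiv _ eqQ.toEquiv.symm
  apply le_antisymm
  · rw [← P.ker_toChar A, Subgroup.index_ker]
    calc Nat.card (P.toChar A).range ≤ Nat.card (↥A →* ℂˣ) :=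
          Subgroup.card_le_card_group _
      _ = Nat.card ↥A := Nat.card_congr eqA.toEquiv
  · have hinj : Function.Injective (P.ofQuot A) := by
      rw [injective_iff_map_eq_one]
      intro a ha
      have key : ∀ y : D, P.e (a : D) y = 1 := by
        intro y
        have h1 : P.e y (a : D) = 1 := by
          have := congrArg Units.val (DFunLike.congr_fun ha ((y : D ⧸ P.perp A)))
          simpa [P.ofQuot_apply A a y] using this
        rw [P.symm_eq_inv y (a : D), h1, inv_one]
      exact Subtype.ext (hnd (a : D) key)
    calc Nat.card ↥A ≤ Nat.card ((D ⧸ P.perp A) →* ℂˣ) :=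
          Nat.card_le_card_of_injective (P.ofQuot A) hinj
      _ = Nat.card (D ⧸ P.perp A) := Nat.card_congr eqQ.toEquiv
      _ = (P.perp A).index := (Subgroup.index_eq_card _).symm

private lemma maximal_isotropic [Finite D]
    (hnd : ∀ x : D, (∀ y : D, P.e x y = 1) → x = 1) (U : Subgroup D)
    (hiso : ∀ a₁ ∈ U, ∀ a₂ ∈ U, P.e a₁ a₂ = 1)
    (hmax : ∀ U' : Subgroup D, U ≤ U' →
      (∀ a₁ ∈ U', ∀ a₂ ∈ U', P.e a₁ a₂ = 1) → U' = U) :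
    Nat.card U = U.index ∧ Nat.card D = Nat.card U ^ 2 := by
  have hperp : P.perp U = U := by
    apply le_antisymm
    · intro x hx
      have hx' : ∀ u ∈ U, P.e x u = 1 := hx
      have hiso' : ∀ a₁ ∈ U ⊔ Subgroup.zpowers x, ∀ a₂ ∈ U ⊔ Subgroup.zpowers x,
          P.e a₁ a₂ = 1 := by
        have hsub : ∀ w : D, (∀ u ∈ U, P.e w u = 1) → P.e w x = 1 →
            U ⊔ Subgroup.zpowers x ≤ P.rker w := by
          intro w h1 h2
          exact sup_le (fun u hu => h1 u hu) ((Subgroup.zpowers_le).mpr h2)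
        intro a₁ h₁ a₂ h₂
        have key : U ⊔ Subgroup.zpowers x ≤ P.lker a₂ := by
          apply sup_le
          · intro u hu
            have hru : U ⊔ Subgroup.zpowers x ≤ P.rker u :=
              hsub u (fun v hv => hiso u hu v hv)
                (by rw [P.symm_eq_inv x u, hx' u hu, inv_one])
            exact hru h₂
          · rw [Subgroup.zpowers_le]
            have hrx : U ⊔ Subgroup.zpowers x ≤ P.rker x := hsub x hx' (P.halt x)
            exact hrx h₂
        exact key h₁
      have heq := hmax (U ⊔ Subgroup.zpowers x) le_sup_left hiso'
      rw [← heq]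
      exact Subgroup.mem_sup_right (Subgroup.mem_zpowers x)
    · intro u hu a ha
      exact hiso u hu a ha
  have h1 : Nat.card U = U.index := by
    have h := P.index_perp hnd U
    rw [hperp] at h
    exact h.symm
  refine ⟨h1, ?_⟩
  have h := Subgroup.card_mul_index U
  rw [← h, ← h1, pow_two]

end Pairing13

/-- Let `D` be a finite abelian group with a nondegenerate alternating bimultiplicative
pairing `e : D × D → ℂ*`.  Every isotropic subgroup `A ⊆ D` has index divisible by
`√#D` (which is an integer), and every maximal isotropic subgroup `U` satisfies
`#U = [D : U] = √#D`. -/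
theorem stmt13 {D : Type*} [CommGroup D] [Finite D]
    (e : D → D → ℂ)
    (hbm₁ : ∀ x y z : D, e (x * y) z = e x z * e y z)
    (hbm₂ : ∀ x y z : D, e x (y * z) = e x y * e x z)
    (halt : ∀ x : D, e x x = 1)
    (hnd : ∀ x : D, (∀ y : D, e x y = 1) → x = 1) :
    (∀ A : Subgroup D, (∀ a₁ ∈ A, ∀ a₂ ∈ A, e a₁ a₂ = 1) →
      ∃ m : ℕ, Nat.card D = m ^ 2 ∧ m ∣ A.index) ∧
    (∀ U : Subgroup D, (∀ a₁ ∈ U, ∀ a₂ ∈ U, e a₁ a₂ = 1) →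
      (∀ U' : Subgroup D, U ≤ U' → (∀ a₁ ∈ U', ∀ a₂ ∈ U', e a₁ a₂ = 1) → U' = U) →
      Nat.card U = U.index ∧ Nat.card D = (Nat.card U) ^ 2) := by
  have key : ∀ U : Subgroup D, (∀ a₁ ∈ U, ∀ a₂ ∈ U, e a₁ a₂ = 1) →
      (∀ U' : Subgroup D, U ≤ U' → (∀ a₁ ∈ U', ∀ a₂ ∈ U', e a₁ a₂ = 1) → U' = U) →
      Nat.card U = U.index ∧ Nat.card D = Nat.card U ^ 2 :=
    fun U hU hmax =>
      Pairing13.maximal_isotropic ⟨e, hbm₁, hbm₂, halt⟩ hnd U hU hmax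
  constructor
  · intro A hA
    have hfin : Finite (Subgroup D) :=
      Finite.of_injective (fun H : Subgroup D => (H : Set D)) SetLike.coe_injective
    obtain ⟨U, hUS, hUmax⟩ := Set.Finite.exists_maximalFor id
      {U : Subgroup D | A ≤ U ∧ ∀ a₁ ∈ U, ∀ a₂ ∈ U, e a₁ a₂ = 1}
      (Set.toFinite _) ⟨A, le_refl A, hA⟩
    obtain ⟨hAU, hUiso⟩ := hUS
    obtain ⟨h1, h2⟩ := key U hUiso
      (fun U' hle hiso' => le_antisymm (hUmax ⟨hAU.trans hle, hiso'⟩ hle) hle)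
    exact ⟨Nat.card U, h2, by rw [h1]; exact Subgroup.index_dvd_of_le hAU⟩
  · intro U hU hmax
    exact key U hU hmax
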